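/- For every fixed λ ≥ 1, the limit as n → ∞ of (1/S_n) times the sum over (λ+1)-tuples of nonnegative integers (i_1, ..., i_{λ+1}) with i_1 + ... + i_{λ+1} = n - λ of S_{i_1} * ... * S_{i_{λ+1}} equals (λ+1)/2^λ. -/

import Mathlib

open Finset PowerSeries Filter

/-- The n-th Catalan number S_n = (1/(n+1)) * C(2n, n). -/
def S (n : ℕ) : ℕ := Nat.choose (2 * n) n / (n + 1)

open Finset

theorem sum_antidiagonalTuple_succ {M : Type*} [AddCommMonoid M] {k n : ℕ}
    (g : (Fin (k + 1) → ℕ) → M) :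
    ∑ f ∈ Finset.Nat.antidiagonalTuple (k + 1) n, g f
      = ∑ p ∈ Finset.HasAntidiagonal.antidiagonal n, ∑ f ∈ Finset.Nat.antidiagonalTuple k p.2,
          g (Fin.cons p.1 f) := by
  rw [Finset.sum_sigma']
  refine Finset.sum_bij' (fun (f : Fin (k + 1) → ℕ) _ => (⟨(f 0, ∑ i : Fin k, f i.succ),
      Fin.tail f⟩ : Σ p : ℕ × ℕ, Fin k → ℕ)) (fun x _ => Fin.cons x.1.1 x.2) ?_ ?_ ?_ ?_ ?_
  · intro a ha
    simp only [Finset.Nat.mem_antidiagonalTuple, Finset.mem_sigma,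
      Finset.HasAntidiagonal.mem_antidiagonal] at ha ⊢
    refine ⟨?_, ?_⟩
    · rw [← ha, Fin.sum_univ_succ]
    · simp [Fin.tail]
  · intro a ha
    simp only [Finset.mem_sigma, Finset.Nat.mem_antidiagonalTuple,
      Finset.HasAntidiagonal.mem_antidiagonal] at ha ⊢
    rw [Fin.sum_cons, ha.2, ha.1]
  · intro a ha
    exact Fin.cons_self_tail a
  · intro a ha
    simp only [Finset.mem_sigma, Finset.Nat.mem_antidiagonalTuple,
      Finset.mem_antidiagonal] at ha
    refine Sigma.ext ?_ ?_
    · simp only [Fin.cons_zero]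
      ext <;> simp [Fin.sum_cons, ha.2]
    · simp [Fin.tail_cons]
  · intro a ha
    exact congrArg g (Fin.cons_self_tail a).symm

open Finset PowerSeries

noncomputable def cgf : PowerSeries ℤ := PowerSeries.mk fun n => (catalan n : ℤ)

theorem cgf_eq : cgf = 1 + PowerSeries.X * cgf ^ 2 := by
  ext n
  cases n with
  | zero => simp [cgf]
  | succ n =>
    simp only [map_add, PowerSeries.coeff_succ_X_mul, cgf, PowerSeries.coeff_mk]
    rw [PowerSeries.coeff_one, if_neg (Nat.succ_ne_zero n), zero_add, sq, PowerSeries.coeff_mul]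
    rw [catalan_succ']
    push_cast
    simp [PowerSeries.coeff_mk]

theorem coeff_cgf_pow (k m : ℕ) :
    PowerSeries.coeff m (cgf ^ k)
      = ∑ f ∈ Finset.Nat.antidiagonalTuple k m, ∏ i, (catalan (f i) : ℤ) := by
  induction k generalizing m with
  | zero =>
    cases m with
    | zero => simp
    | succ m => simp [PowerSeries.coeff_one]
  | succ k ih =>
    rw [pow_succ, mul_comm, PowerSeries.coeff_mul, sum_antidiagonalTuple_succ]
    refine Finset.sum_congr rfl fun p hp => ?_
    rw [ih p.2, Finset.mul_sum]
    refine Finset.sum_congr rfl fun f hf => ?_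
    simp [Fin.prod_univ_succ, cgf, PowerSeries.coeff_mk]

open Finset PowerSeries

def T : ℕ → ℕ → ℤ
  | _, 0 => 1
  | k, (m+1) => ((2*m+k+1).choose (m+1) : ℤ) - ((2*m+k+1).choose m : ℤ)

theorem T_one (m : ℕ) : T 1 m = catalan m := by
  cases m with
  | zero => simp [T]
  | succ m =>
    have h1 : (2*m+1+1).choose (m+1) * (m+1) = (2*m+1+1).choose m * (m+2) := by
      have := Nat.choose_succ_right_eq (2*m+1+1) m
      rw [show 2*m+1+1-m = m+2 by omega] at this
      exact this
    have h2 : (m + 1 + 1) * catalan (m+1) = (2*m+1+1).choose (m+1) := by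
      have := succ_mul_catalan_eq_centralBinom (m+1)
      rw [Nat.centralBinom] at this
      rw [show 2*m+1+1 = 2*(m+1) by ring]
      exact this
    have hm2 : ((m:ℤ) + 2) ≠ 0 := by positivity
    show ((2*m+1+1).choose (m+1) : ℤ) - ((2*m+1+1).choose m : ℤ) = catalan (m+1)
    refine mul_right_cancel₀ hm2 ?_
    have h2' : ((m:ℤ) + 2) * (catalan (m+1) : ℤ) = ((2*m+1+1).choose (m+1) : ℤ) := by
      exact_mod_cast congrArg (Nat.cast : ℕ → ℤ) h2
    have h1' : ((2*m+1+1).choose (m+1) : ℤ) * (m+1) = ((2*m+1+1).choose m : ℤ) * (m+2) := by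
      exact_mod_cast congrArg (Nat.cast : ℕ → ℤ) h1
    linarith

theorem T_pascal (k m : ℕ) : T (k+2) m = T (k+1) (m+1) - T k (m+1) := by
  cases m with
  | zero =>
    simp only [T]
    push_cast [Nat.choose_one_right, Nat.choose_zero_right]
    ring
  | succ m =>
    simp only [T]
    rw [show 2*(m+1)+(k+1)+1 = (2*m+k+3)+1 by ring, show 2*(m+1)+k+1 = 2*m+k+3 by ring,
      show 2*m+(k+2)+1 = 2*m+k+3 by ring]
    rw [Nat.choose_succ_succ (2*m+k+3) (m+1), Nat.choose_succ_succ (2*m+k+3) m]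
    push_cast
    ring

open Finset PowerSeries

theorem coeff_cgf_pow_eq_T (k m : ℕ) : PowerSeries.coeff m (cgf ^ k) = T k m := by
  have main : ∀ k, (∀ m, PowerSeries.coeff m (cgf ^ k) = T k m)
      ∧ (∀ m, PowerSeries.coeff m (cgf ^ (k+1)) = T (k+1) m) := by
    intro k
    induction k with
    | zero =>
      constructor
      · intro m
        cases m with
        | zero => simp [T]
        | succ m =>
          rw [pow_zero, PowerSeries.coeff_one, if_neg (Nat.succ_ne_zero m)]
          show (0:ℤ) = ((2*m+0+1).choose (m+1) : ℤ) - ((2*m+0+1).choose m : ℤ)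
          rw [show 2*m+0+1 = 2*m+1 by ring, Nat.choose_symm_half]
          ring
      · intro m
        rw [pow_one, T_one, cgf, PowerSeries.coeff_mk]
    | succ k ih =>
      refine ⟨ih.2, ?_⟩
      intro m
      have hps : cgf ^ (k+1) = cgf ^ k + PowerSeries.X * cgf ^ (k+2) := by
        calc cgf ^ (k+1) = cgf ^ k * cgf := pow_succ _ _
        _ = cgf ^ k * (1 + PowerSeries.X * cgf ^ 2) := by rw [← cgf_eq]
        _ = cgf ^ k + PowerSeries.X * cgf ^ (k+2) := by ring
      have hcoeff := congrArg (PowerSeries.coeff (m+1)) hps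
      rw [map_add, PowerSeries.coeff_succ_X_mul, ih.2 (m+1), ih.1 (m+1)] at hcoeff
      have := T_pascal k m
      show PowerSeries.coeff m (cgf ^ (k+2)) = T (k+2) m
      omega
  exact (main k).1 m

theorem sum_catalan_eq_T (k m : ℕ) :
    ∑ f ∈ Finset.Nat.antidiagonalTuple k m, ∏ i, (catalan (f i) : ℤ) = T k m := by
  rw [← coeff_cgf_pow, coeff_cgf_pow_eq_T]

theorem key_identity (l m : ℕ) :
    (∑ f ∈ Finset.Nat.antidiagonalTuple (l+1) m, ∏ i, (catalan (f i) : ℤ)) * (m + l + 1)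
      = (l + 1) * ((2*m+l).choose m : ℤ) := by
  rw [sum_catalan_eq_T]
  cases m with
  | zero => simp [T]
  | succ m =>
    show (((2*m+(l+1)+1).choose (m+1) : ℤ) - ((2*m+(l+1)+1).choose m : ℤ)) * _ = _
    rw [show 2*m+(l+1)+1 = 2*m+l+2 by ring, show 2*(m+1)+l = 2*m+l+2 by ring]
    have h := Nat.choose_succ_right_eq (2*m+l+2) m
    rw [show 2*m+l+2-m = m+l+2 by omega] at h
    have h' : ((2*m+l+2).choose (m+1) : ℤ) * (m+1) = ((2*m+l+2).choose m : ℤ) * (m+l+2) := by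
      exact_mod_cast congrArg (Nat.cast : ℕ → ℤ) h
    push_cast
    linarith

open Finset Filter

theorem choose_telescope (l n : ℕ) (h : l ≤ n) :
    ((2*n - l).choose (n - l) : ℝ)
      = ((2*n).choose n : ℝ) * ∏ j ∈ range l, (((n:ℝ) - j) / (2*(n:ℝ) - j)) := by
  induction l with
  | zero => simp
  | succ l ih =>
    have hl : l ≤ n := by omega
    have h1 : (2*n - l) * ((2*n - l - 1).choose (n - l - 1)) = (2*n - l).choose (n-l) * (n - l) := by
      have := Nat.add_one_mul_choose_eq (2*n - l - 1) (n - l - 1)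
      rw [show 2*n-l-1+1 = 2*n-l by omega, show n-l-1+1 = n-l by omega] at this
      exact this
    have h1' : (2*(n:ℝ) - l) * ((2*n - (l+1)).choose (n - (l+1)) : ℝ)
        = ((2*n - l).choose (n-l) : ℝ) * ((n:ℝ) - l) := by
      have := congrArg (Nat.cast : ℕ → ℝ) h1
      push_cast [Nat.cast_sub (show l ≤ 2*n by omega), Nat.cast_sub hl,
        show 2*n-l-1 = 2*n-(l+1) by omega, show n-l-1 = n-(l+1) by omega] at this
      linarith
    have hne : 2*(n:ℝ) - l ≠ 0 := by
      have : (l:ℝ) < 2*n := by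
        have : (l:ℝ) ≤ n := by exact_mod_cast hl
        have hn : (1:ℝ) ≤ n := by exact_mod_cast (show 1 ≤ n by omega)
        linarith
      linarith
    rw [prod_range_succ, ← mul_assoc, ← ih hl]
    field_simp
    rw [eq_div_iff (by contrapose! hne; linarith)]
    linarith [h1']

open Finset Filter

theorem factor_tendsto (c : ℝ) :
    Tendsto (fun n : ℕ => ((n:ℝ) - c) / (2*(n:ℝ) - c)) atTop (nhds (1/2)) := by
  have h0 : Tendsto (fun n : ℕ => c / (n:ℝ)) atTop (nhds 0) :=
    tendsto_const_div_atTop_nhds_zero_nat c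
  have h1 : Tendsto (fun n : ℕ => (1 - c/(n:ℝ)) / (2 - c/(n:ℝ))) atTop
      (nhds ((1 - 0) / (2 - 0))) :=
    (tendsto_const_nhds.sub h0).div (tendsto_const_nhds.sub h0) (by norm_num)
  norm_num at h1
  refine h1.congr' ?_
  have hev : ∀ᶠ n : ℕ in atTop, c < (n:ℝ) :=
    tendsto_natCast_atTop_atTop.eventually_gt_atTop c
  filter_upwards [hev, eventually_ge_atTop 1] with n hc hn1
  have hn : (0:ℝ) < n := by exact_mod_cast hn1
  have h2 : 2*(n:ℝ) - c ≠ 0 := by nlinarith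
  have h3 : (2 : ℝ) - c/n ≠ 0 := by
    rw [sub_ne_zero]
    intro h
    apply h2
    field_simp at h ⊢
    linarith
  field_simp
theorem S_eq_catalan (n : ℕ) : S n = catalan n := by
  rw [catalan_eq_centralBinom_div, Nat.centralBinom, S]

theorem catalan_composition_sum_limit (l : ℕ) (hl : 1 ≤ l) :
    Filter.Tendsto
      (fun n : ℕ =>
        (∑ f ∈ Finset.Nat.antidiagonalTuple (l + 1) (n - l), ∏ i, (S (f i) : ℝ)) / (S n : ℝ))
      Filter.atTop (nhds ((l + 1) / 2 ^ l)) := by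
  have target : Tendsto
      (fun n : ℕ => ((l:ℝ)+1) * ∏ j ∈ range l, (((n:ℝ) - j) / (2*(n:ℝ) - j)))
      atTop (nhds (((l:ℝ)+1)/2^l)) := by
    have hp := tendsto_finset_prod (range l)
      (fun j (_ : j ∈ range l) => factor_tendsto (j:ℝ))
    have h2 := hp.const_mul ((l:ℝ)+1)
    have : ((l:ℝ)+1) * ∏ _j ∈ range l, ((1:ℝ)/2) = ((l:ℝ)+1)/2^l := by
      rw [prod_const, card_range, one_div, inv_pow, div_eq_mul_inv]
    rwa [this] at h2
  have hval : ((l:ℝ) + 1) / 2 ^ l = ((l + 1) / 2 ^ l : ℝ) := by push_cast; ring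
  rw [← hval]
  refine Tendsto.congr' ?_ target
  filter_upwards [eventually_ge_atTop (l+1)] with n hn
  symm
  have hln : l ≤ n := by omega
  have harg : 2*(n-l)+l = 2*n-l := by omega
  have hle2 : n ≤ 2*n := by omega
  set Z : ℤ := ∑ f ∈ Finset.Nat.antidiagonalTuple (l+1) (n-l), ∏ i, (catalan (f i) : ℤ)
    with hZdef
  clear_value Z
  have step1 : (∑ f ∈ Finset.Nat.antidiagonalTuple (l + 1) (n - l), ∏ i, (S (f i) : ℝ))
      = (Z:ℝ) := by
    rw [hZdef]
    push_cast [S_eq_catalan]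
    rfl
  have hkey := key_identity l (n - l)
  rw [harg] at hkey
  have hZk : Z * ((n:ℤ) + 1) = ((l:ℤ)+1) * (((2*n-l).choose (n-l) : ℕ) : ℤ) := by
    rw [hZdef]
    push_cast [Nat.cast_sub hln] at hkey ⊢
    rw [show (n:ℤ) - l + l + 1 = (n:ℤ) + 1 by ring] at hkey
    exact hkey
  have hkeyR : (Z:ℝ) * ((n:ℝ)+1) = ((l:ℝ)+1) * (((2*n-l).choose (n-l) : ℕ) : ℝ) := by
    exact_mod_cast congrArg (Int.cast : ℤ → ℝ) hZk
  rw [choose_telescope l n hln] at hkeyR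
  have hc : (catalan n : ℝ) * ((n:ℝ)+1) = (((2*n).choose n : ℕ) : ℝ) := by
    have := succ_mul_catalan_eq_centralBinom n
    rw [Nat.centralBinom] at this
    exact_mod_cast congrArg (Nat.cast : ℕ → ℝ) (by linarith [this] : catalan n * (n+1) = (2*n).choose n)
  have hCpos : (0:ℝ) < (((2*n).choose n : ℕ) : ℝ) := by
    exact_mod_cast Nat.choose_pos hle2
  have hn1 : (0:ℝ) < (n:ℝ) + 1 := by positivity
  have hcatpos : (0:ℝ) < (catalan n : ℝ) := by nlinarith
  rw [step1, S_eq_catalan, div_eq_iff (ne_of_gt hcatpos)]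
  refine mul_right_cancel₀ (ne_of_gt hn1) ?_
  calc (Z:ℝ) * ((n:ℝ)+1)
      = ((l:ℝ)+1) * ((((2*n).choose n : ℕ) : ℝ)
        * ∏ j ∈ range l, (((n:ℝ) - j) / (2*(n:ℝ) - j))) := hkeyR
    _ = (((l:ℝ)+1) * ∏ j ∈ range l, (((n:ℝ) - j) / (2*(n:ℝ) - j))) * (catalan n : ℝ)
        * ((n:ℝ)+1) := by rw [← hc]; ring
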